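/- Let h ≥ 1 be an integer and define d(α) for integers α ≥ 1 by the recurrence ∑_{j=0}^{h−1} C(h−j, j) · d(h−j) = (−1)^h · 2^{h+1} / h for all h ≥ 1 (where C(h−j, j) = 0 when j > h−j). Then d(h) = (−1)^h · ∑_{j=0}^{h−1} (2^{h−j+1}/(h+j)) · C(h+j, j). -/

import Mathlib

open Finset
lemma qA (n : ℕ) :
    ∑ j ∈ range (n+1), ((n+j).choose j : ℚ) / 2^j = 2^n := by
  induction n with
  | zero => simp
  | succ n ih =>
    set X : ℚ := ∑ j ∈ range (n+1+1), ((n+1+j).choose j : ℚ) / 2^j with hX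
    have hA1 : X = ∑ j ∈ range (n+1), ((n+1+j).choose j : ℚ) / 2^j
          + ((2*n+1).choose (n+1) : ℚ) * 2 / 2^(n+1) := by
      rw [hX, Finset.sum_range_succ]
      have h2 : (n+1+(n+1)).choose (n+1) = (2*n+1).choose (n+1) * 2 := by
        have hp : (n+1+(n+1)).choose (n+1) = (2*n+1).choose n + (2*n+1).choose (n+1) := by
          have : n+1+(n+1) = (2*n+1) + 1 := by ring
          rw [this, Nat.choose_succ_succ]
        have hs : (2*n+1).choose n = (2*n+1).choose (n+1) := by
          have h := Nat.choose_symm (n := 2*n+1) (k := n) (by omega)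
          rw [show 2*n+1-n = n+1 by omega] at h
          exact h.symm
        omega
      rw [h2]; push_cast; ring
    have hA2 : X = (∑ j ∈ range (n+1), ((n+1+j).choose j : ℚ) / 2^(j+1))
          + (∑ j ∈ range (n+1), ((n+(j+1)).choose (j+1) : ℚ) / 2^(j+1)) + 1 := by
      rw [hX, Finset.sum_range_succ']
      have h : ∀ j ∈ range (n+1), ((n+1+(j+1)).choose (j+1) : ℚ) / 2^(j+1)
          = ((n+1+j).choose j : ℚ) / 2^(j+1) + ((n+(j+1)).choose (j+1) : ℚ) / 2^(j+1) := by
        intro j hj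
        have hp : (n+1+(j+1)).choose (j+1) = (n+1+j).choose j + (n+1+j).choose (j+1) := by
          have : n+1+(j+1) = (n+1+j) + 1 := by ring
          rw [this, Nat.choose_succ_succ]
        rw [hp, show n+(j+1) = n+1+j by ring]; push_cast; ring
      rw [Finset.sum_congr rfl h, Finset.sum_add_distrib]
      simp
    have hA3 : ∑ j ∈ range (n+1), ((n+1+j).choose j : ℚ) / 2^(j+1)
        = (∑ j ∈ range (n+1), ((n+1+j).choose j : ℚ) / 2^j) / 2 := by
      rw [Finset.sum_div]
      refine Finset.sum_congr rfl fun j hj => ?_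
      rw [pow_succ]; ring
    have hA4 : (∑ j ∈ range (n+1), ((n+(j+1)).choose (j+1) : ℚ) / 2^(j+1))
        = (2:ℚ)^n - 1 + ((2*n+1).choose (n+1) : ℚ) / 2^(n+1) := by
      have e1 : ∑ i ∈ range (n+2), ((n+i).choose i : ℚ) / 2^i
          = (∑ j ∈ range (n+1), ((n+(j+1)).choose (j+1) : ℚ) / 2^(j+1)) + 1 := by
        rw [Finset.sum_range_succ']; simp
      have e2 : ∑ i ∈ range (n+2), ((n+i).choose i : ℚ) / 2^i
          = 2^n + ((2*n+1).choose (n+1) : ℚ) / 2^(n+1) := by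
        rw [Finset.sum_range_succ, ih, show n+(n+1) = 2*n+1 by ring]
      rw [e2] at e1; linarith
    rw [hA3, hA4] at hA2
    have hc : ((2*n+1).choose (n+1) : ℚ) * 2 / 2^(n+1)
        = 2 * (((2*n+1).choose (n+1) : ℚ) / 2^(n+1)) := by ring
    rw [hc] at hA1
    have hp : (2:ℚ)^(n+1) = 2 * 2^n := by ring
    linarith

lemma qP (n : ℕ) :
    ∑ j ∈ range (n+1), ((n-j).choose j : ℚ) * (-4)^(n-j) = (n+1) * (-2)^n := by
  induction n using Nat.twoStepInduction with
  | zero => simp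
  | one => norm_num [Finset.sum_range_succ]
  | more n ih1 ih2 =>
    have e1 : ∑ j ∈ range (n+2+1), ((n+2-j).choose j : ℚ) * (-4)^(n+2-j)
        = ∑ j ∈ range (n+2), ((n+1-j).choose (j+1) : ℚ) * (-4)^(n+1-j) + (-4)^(n+2) := by
      rw [Finset.sum_range_succ']
      congr 1
      · refine Finset.sum_congr rfl fun j hj => ?_
        rw [show n+2-(j+1) = n+1-j by omega]
      · simp
    have e2 : ∑ j ∈ range (n+2), ((n+1-j).choose (j+1) : ℚ) * (-4)^(n+1-j)
        = ∑ j ∈ range (n+1), ((n+1-j).choose (j+1) : ℚ) * (-4)^(n+1-j) := by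
      rw [Finset.sum_range_succ]
      simp
    have e3 : ∀ j ∈ range (n+1), ((n+1-j).choose (j+1) : ℚ) * (-4)^(n+1-j)
        = ((n-j).choose j : ℚ) * (-4) * (-4)^(n-j)
          + ((n-j).choose (j+1) : ℚ) * (-4) * (-4)^(n-j) := by
      intro j hj
      simp only [Finset.mem_range] at hj
      have h1 : n+1-j = (n-j)+1 := by omega
      rw [h1, Nat.choose_succ_succ, pow_succ]
      push_cast; ring
    have e4 : ∑ j ∈ range (n+1+1), ((n+1-j).choose j : ℚ) * (-4)^(n+1-j)
        = ∑ j ∈ range (n+1), ((n-j).choose (j+1) : ℚ) * (-4)^(n-j) + (-4)^(n+1) := by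
      rw [Finset.sum_range_succ']
      congr 1
      · refine Finset.sum_congr rfl fun j hj => ?_
        rw [show n+1-(j+1) = n-j by omega]
      · simp
    rw [e1, e2, Finset.sum_congr rfl e3, Finset.sum_add_distrib]
    have s1 : ∑ j ∈ range (n+1), ((n-j).choose j : ℚ) * (-4) * (-4)^(n-j)
        = (-4) * ((n+1) * (-2)^n) := by
      rw [← ih1, Finset.mul_sum]
      exact Finset.sum_congr rfl fun j hj => by ring
    have s2 : ∑ j ∈ range (n+1), ((n-j).choose (j+1) : ℚ) * (-4) * (-4)^(n-j)
        = (-4) * ((n+2) * (-2)^(n+1) - (-4)^(n+1)) := by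
      have : ∑ j ∈ range (n+1), ((n-j).choose (j+1) : ℚ) * (-4)^(n-j)
          = (n+2) * (-2)^(n+1) - (-4)^(n+1) := by
        have := ih2
        rw [e4] at this
        push_cast at this ⊢
        linarith
      rw [← this, Finset.mul_sum]
      exact Finset.sum_congr rfl fun j hj => by ring
    rw [s1, s2]
    push_cast; ring

lemma qB (m : ℕ) :
    ∑ j ∈ range (m+1), ((m+1-j).choose j : ℚ) * (-4)^(m+1-j) / ((m+1-j : ℕ) : ℚ)
      = 2*(-2)^(m+1)/((m+1 : ℕ) : ℚ) := by
  have hm : ((m+1 : ℕ) : ℚ) ≠ 0 := by positivity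
  rw [eq_div_iff hm, Finset.sum_mul]
  have hG : ∀ j ∈ range (m+1),
      ((m+1-j).choose j : ℚ) * (-4)^(m+1-j) / ((m+1-j : ℕ) : ℚ) * ((m+1 : ℕ) : ℚ)
      = ((m+1 : ℕ) : ℚ) * (((m+1-j).choose j : ℚ) * (-4)^(m+1-j) / ((m+1-j : ℕ) : ℚ)) := by
    intro j hj; ring
  rw [Finset.sum_congr rfl hG, Finset.sum_range_succ']
  -- g 0 term
  have hg0 : ((m+1 : ℕ) : ℚ) * (((m+1-0).choose 0 : ℚ) * (-4)^(m+1-0) / ((m+1-0 : ℕ) : ℚ))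
      = (-4)^(m+1) := by
    simp only [Nat.sub_zero, Nat.choose_zero_right, Nat.cast_one, one_mul]
    field_simp
  rw [hg0]
  -- term identity
  have key : ∀ i ∈ range m,
      ((m+1 : ℕ) : ℚ) * (((m+1-(i+1)).choose (i+1) : ℚ) * (-4)^(m+1-(i+1)) / ((m+1-(i+1) : ℕ) : ℚ))
      = ((m-i).choose (i+1) : ℚ) * (-4)^(m-i) + ((m-1-i).choose i : ℚ) * (-4)^(m-i) := by
    intro i hi
    simp only [Finset.mem_range] at hi
    have h1 : m+1-(i+1) = m-i := by omega
    rw [h1]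
    have hnat : (m+1) * ((m-i).choose (i+1)) = (m-i) * ((m-i).choose (i+1)) + (m-i) * ((m-1-i).choose i) := by
      have h2 : (m-i-1)+1 = m-i := by omega
      have h3 := Nat.add_one_mul_choose_eq (m-i-1) i
      rw [h2] at h3
      have h4 : m - i - 1 = m - 1 - i := by omega
      rw [h4] at h3
      have h5 : m + 1 = (m-i) + (i+1) := by omega
      calc (m+1) * ((m-i).choose (i+1)) = (m-i) * ((m-i).choose (i+1)) + ((m-i).choose (i+1)) * (i+1) := by
            rw [h5]; ring
        _ = (m-i) * ((m-i).choose (i+1)) + (m-i) * ((m-1-i).choose i) := by rw [← h3]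
    have hq : ((m+1 : ℕ) : ℚ) * ((m-i).choose (i+1) : ℚ)
        = ((m-i : ℕ) : ℚ) * ((m-i).choose (i+1) : ℚ) + ((m-i : ℕ) : ℚ) * ((m-1-i).choose i : ℚ) := by
      exact_mod_cast congrArg (Nat.cast : ℕ → ℚ) hnat
    have hne : ((m-i : ℕ) : ℚ) ≠ 0 := Nat.cast_ne_zero.mpr (by omega)
    push_cast at hq ⊢
    field_simp
    linear_combination hq
  rw [Finset.sum_congr rfl key, Finset.sum_add_distrib]
  -- S1
  have hS1 : ∑ i ∈ range m, ((m-i).choose (i+1) : ℚ) * (-4)^(m-i)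
      = ((m+2 : ℕ) : ℚ) * (-2)^(m+1) - (-4)^(m+1) := by
    have h := qP (m+1)
    rw [Finset.sum_range_succ'] at h
    simp only [Nat.succ_sub_succ] at h
    rw [Finset.sum_range_succ] at h
    have hz : ((m-m).choose (m+1) : ℚ) = 0 := by
      simp [Nat.choose_eq_zero_of_lt]
    rw [Nat.sub_self] at h
    simp only [Nat.choose_zero_right, Nat.sub_zero, Nat.cast_one, one_mul] at h
    have : (0:ℕ).choose (m+1) = 0 := Nat.choose_eq_zero_of_lt (by omega)
    rw [this] at h
    push_cast at h ⊢
    linarith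
  rcases m with _|k
  · norm_num
  · have hS2 : ∑ i ∈ range (k+1), ((k+1-1-i).choose i : ℚ) * (-4)^(k+1-i)
        = -4 * (((k+1 : ℕ) : ℚ) * (-2)^k) := by
      have hc : ∀ i ∈ range (k+1), ((k+1-1-i).choose i : ℚ) * (-4)^(k+1-i)
          = -4 * (((k-i).choose i : ℚ) * (-4)^(k-i)) := by
        intro i hi
        simp only [Finset.mem_range] at hi
        rw [show k+1-1-i = k-i by omega, show k+1-i = (k-i)+1 by omega, pow_succ]
        ring
      rw [Finset.sum_congr rfl hc, ← Finset.mul_sum, qP k]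
      push_cast
      ring
    rw [hS1, hS2]
    push_cast
    ring

lemma qC (m : ℕ) :
    ∑ j ∈ range (m+1), (2:ℚ)^(m+1-j+1) / (((m+1 : ℕ) : ℚ) + (j : ℚ)) * ((m+1+j).choose j : ℚ)
      = 4^(m+1)/((m+1 : ℕ) : ℚ) := by
  have hm : ((m+1 : ℕ) : ℚ) ≠ 0 := by positivity
  have key : ∀ j ∈ range (m+1),
      (2:ℚ)^(m+1-j+1) / (((m+1 : ℕ) : ℚ) + (j : ℚ)) * ((m+1+j).choose j : ℚ)
      = (2:ℚ)^(m+2)/((m+1 : ℕ) : ℚ) * (((m+j).choose j : ℚ) / 2^j) := by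
    intro j hj
    simp only [Finset.mem_range] at hj
    have hnat : (m+j+1) * ((m+j).choose j) = (m+j+1).choose j * (m+1) := by
      have h1 := Nat.add_one_mul_choose_eq (m+j) m
      have hs1 : (m+j).choose m = (m+j).choose j := by
        have h := Nat.choose_symm (Nat.le_add_left j m)
        rwa [show m+j-j = m by omega] at h
      have hs2 : (m+j+1).choose (m+1) = (m+j+1).choose j := by
        have h := Nat.choose_symm (show m+1 ≤ m+j+1 by omega)
        rw [show m+j+1-(m+1) = j by omega] at h
        exact h.symm
      rw [hs1, hs2] at h1
      exact h1
    have hq : (((m:ℚ)+(j:ℚ))+1) * (((m+j).choose j : ℚ)) = ((m+j+1).choose j : ℚ) * ((m:ℚ)+1) := by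
      exact_mod_cast congrArg (Nat.cast : ℕ → ℚ) hnat
    have hx : (2:ℚ)^(m+1-j+1) = 2^(m+2)/2^j := by
      rw [eq_div_iff (by positivity), ← pow_add, show m+1-j+1+j = m+2 by omega]
    rw [hx, show m+1+j = m+j+1 by ring]
    have hd : ((m+1 : ℕ) : ℚ) + (j : ℚ) ≠ 0 := by positivity
    push_cast at hd hm ⊢
    have hc : ((m+j+1).choose j : ℚ) = ((m:ℚ)+1+(j:ℚ)) * ((m+j).choose j : ℚ) / ((m:ℚ)+1) := by
      rw [eq_div_iff hm]
      linear_combination -hq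
    rw [hc]
    field_simp
  rw [Finset.sum_congr rfl key, ← Finset.mul_sum, qA m]
  rw [div_mul_eq_mul_div]
  congr 1
  rw [← pow_add, show m+2+m = 2*(m+1) by ring, pow_mul]
  norm_num

private lemma qd (d : ℕ → ℚ)
    (hd : ∀ h : ℕ, 1 ≤ h →
      ∑ j ∈ Finset.range h, (Nat.choose (h - j) j : ℚ) * d (h - j)
        = (-1) ^ h * 2 ^ (h + 1) / (h : ℚ)) :
    ∀ h, 1 ≤ h → d h = (-4)^h / ((h : ℕ) : ℚ) := by
  intro h
  induction h using Nat.strong_induction_on with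
  | _ h ih =>
    intro h1
    obtain ⟨m, rfl⟩ : ∃ m, h = m+1 := ⟨h-1, by omega⟩
    have H := hd (m+1) (by omega)
    rw [Finset.sum_range_succ'] at H
    simp only [Nat.succ_sub_succ, Nat.sub_zero, Nat.choose_zero_right, Nat.cast_one,
      one_mul] at H
    have hIH : ∀ i ∈ range m, ((m-i).choose (i+1) : ℚ) * d (m-i)
        = ((m-i).choose (i+1) : ℚ) * ((-4)^(m-i) / ((m-i : ℕ) : ℚ)) := by
      intro i hi
      simp only [Finset.mem_range] at hi
      rw [ih (m-i) (by omega) (by omega)]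
    rw [Finset.sum_congr rfl hIH] at H
    have HB := qB m
    rw [Finset.sum_range_succ'] at HB
    simp only [Nat.succ_sub_succ, Nat.sub_zero, Nat.choose_zero_right, Nat.cast_one,
      one_mul] at HB
    have hterm : ∀ i ∈ range m, ((m-i).choose (i+1) : ℚ) * (-4)^(m-i) / ((m-i : ℕ) : ℚ)
        = ((m-i).choose (i+1) : ℚ) * ((-4)^(m-i) / ((m-i : ℕ) : ℚ)) := by
      intro i _; ring
    rw [Finset.sum_congr rfl hterm] at HB
    have hkey : (-1:ℚ)^(m+1) * 2^(m+1+1) = 2*(-2)^(m+1) := by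
      rw [neg_pow (2:ℚ)]; ring
    have hfin : d (m+1) = (-1:ℚ)^(m+1) * 2^(m+1+1)/((m+1 : ℕ) : ℚ)
        - (2*(-2)^(m+1)/((m+1 : ℕ) : ℚ) - (-4)^(m+1)/((m+1 : ℕ) : ℚ)) := by
      linarith [H, HB]
    rw [hfin, hkey]
    ring

/-- Chebyshev-type inverse relation: if `d : ℕ → ℚ` satisfies
`∑_{j=0}^{h−1} C(h−j, j) d(h−j) = (−1)^h 2^{h+1}/h` for all `h ≥ 1`, then
`d(h) = (−1)^h ∑_{j=0}^{h−1} (2^{h−j+1}/(h+j)) C(h+j, j)` for all `h ≥ 1`. -/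
theorem stmt16 (d : ℕ → ℚ)
    (hd : ∀ h : ℕ, 1 ≤ h →
      ∑ j ∈ Finset.range h, (Nat.choose (h - j) j : ℚ) * d (h - j)
        = (-1) ^ h * 2 ^ (h + 1) / (h : ℚ)) :
    ∀ h : ℕ, 1 ≤ h →
      d h = (-1) ^ h *
        ∑ j ∈ Finset.range h, (2 : ℚ) ^ (h - j + 1) / ((h : ℚ) + (j : ℚ)) *
          (Nat.choose (h + j) j : ℚ) := by
  intro h h1
  obtain ⟨m, rfl⟩ : ∃ m, h = m+1 := ⟨h-1, by omega⟩
  rw [qd d hd (m+1) (by omega), qC m]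
  rw [show ((-4:ℚ)) = -4 from rfl, neg_pow (4:ℚ)]
  ring
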